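/- A composition is a palindrome if and only if all factors in its unique irreducible factorization are palindromes. -/

import Mathlib

/-- A composition: a nonempty list of positive integers. -/
def IsComposition (l : List ℕ) : Prop := l ≠ [] ∧ ∀ x ∈ l, 0 < x

/-- `Coarsens α β` : α is a coarsening of β, i.e. α is obtained from β by
summing blocks of consecutive components. -/
def Coarsens (α β : List ℕ) : Prop :=
  ∃ P : List (List ℕ), P.flatten = β ∧ (∀ p ∈ P, p ≠ []) ∧ α = P.map List.sum

/-- All ways of splitting a list into blocks of consecutive elements. -/
def splits : List ℕ → List (List (List ℕ))
  | [] => [[]]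
  | a :: rest =>
    (splits rest).flatMap fun s =>
      match s with
      | [] => [[[a]]]
      | b :: bs => [(a :: b) :: bs, [a] :: b :: bs]

/-- The list of all coarsenings of a composition. -/
def coarsenings (β : List ℕ) : List (List ℕ) :=
  (splits β).map (fun P => P.map List.sum)

/-- The L-polynomial of a composition, encoded as the multiset of monomials
`x_{λ(α)}` over coarsenings `α` of `β`; each monomial is recorded as the
multiset (partition) of the components of `α`. -/
def Lpoly (β : List ℕ) : Multiset (Multiset ℕ) :=
  ((coarsenings β).map fun α => (α : Multiset ℕ) : List (Multiset ℕ))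

/-- Near-concatenation of compositions. -/
def odot : List ℕ → List ℕ → List ℕ
  | [], β => β
  | [a], [] => [a]
  | [a], b :: bs => (a + b) :: bs
  | a :: b :: as, β => a :: odot (b :: as) β

/-- `odotPow α i` is the `i`-fold near-concatenation `α^{⊙i}`. -/
def odotPow (α : List ℕ) : ℕ → List ℕ
  | 0 => []
  | n + 1 => odot (odotPow α n) α

/-- The composition product `β ∘ α = α^{⊙β₁} · α^{⊙β₂} ⋯ α^{⊙β_k}`. -/
def circ (β α : List ℕ) : List ℕ :=
  (β.map (odotPow α)).flatten

/-- A trivial factorization `β ∘ γ`. -/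
def TrivialFact (β γ : List ℕ) : Prop :=
  β = [1] ∨ γ = [1] ∨ (β.length = 1 ∧ γ.length = 1) ∨
    ((∀ b ∈ β, b = 1) ∧ (∀ c ∈ γ, c = 1))

/-- A composition admitting only trivial factorizations. -/
def IrredComp (f : List ℕ) : Prop :=
  ∀ β γ : List ℕ, IsComposition β → IsComposition γ → f = circ β γ → TrivialFact β γ

/-- Product of a list of compositions under `∘` (with identity `[1]`). -/
def circList : List (List ℕ) → List ℕ
  | [] => [1]
  | f :: fs => circ f (circList fs)

/-- `fs` is an irreducible factorization of `α`:
all factors are irreducible compositions, and no consecutive product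
`α_i ∘ α_{i+1}` is a trivial factorization. -/
def IsIrredFactorization (α : List ℕ) (fs : List (List ℕ)) : Prop :=
  fs ≠ [] ∧ (∀ f ∈ fs, IsComposition f ∧ IrredComp f) ∧
    fs.Chain' (fun a b => ¬ TrivialFact a b) ∧ α = circList fs

/-- `N(γ) = |γ| - ℓ(γ)`. -/
def Nstat (γ : List ℕ) : ℕ := γ.sum - γ.length


lemma odot_nil_left (B : List ℕ) : odot [] B = B := rfl

lemma odot_nil_right : ∀ X : List ℕ, odot X [] = X
  | [] => rfl
  | [a] => rfl
  | a :: b :: as => by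
    show a :: odot (b :: as) [] = _
    rw [odot_nil_right (b :: as)]

lemma odot_cons (a : ℕ) {L : List ℕ} (h : L ≠ []) (Z : List ℕ) :
    odot (a :: L) Z = a :: odot L Z := by
  cases L with
  | nil => exact absurd rfl h
  | cons b as => rfl

lemma odot_formula : ∀ (X B : List ℕ) (hX : X ≠ []) (hB : B ≠ []),
    odot X B = X.dropLast ++ (X.getLast hX + B.head hB) :: B.tail
  | [a], b :: bs, _, _ => rfl
  | a :: b :: as, B, _, hB => by
    rw [odot_cons a (by simp) B, odot_formula (b :: as) B (by simp) hB]
    simp [List.getLast_cons]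

lemma odot_ne_nil (X : List ℕ) {B : List ℕ} (hB : B ≠ []) : odot X B ≠ [] := by
  cases X with
  | nil => simpa [odot_nil_left] using hB
  | cons a L =>
    cases L with
    | nil =>
      cases B with
      | nil => exact absurd rfl hB
      | cons b bs => simp [odot]
    | cons b as => simp [odot]

lemma odot_assoc : ∀ (X Y Z : List ℕ), odot (odot X Y) Z = odot X (odot Y Z)
  | [], Y, Z => rfl
  | [a], [], Z => by rw [odot_nil_right]; rfl
  | [a], y :: ys, Z => by
    cases Z with
    | nil => rw [odot_nil_right, odot_nil_right]
    | cons z zs =>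
      cases ys with
      | nil => show odot [a+y] (z::zs) = odot [a] (odot [y] (z::zs)); simp [odot, Nat.add_assoc]
      | cons w ws =>
        show odot ((a+y) :: w :: ws) (z :: zs) = odot [a] (y :: odot (w :: ws) (z :: zs))
        rw [odot_cons (a+y) (by simp) (z::zs)]
        rcases List.exists_cons_of_ne_nil (odot_ne_nil (w::ws) (by simp : (z::zs) ≠ [])) with ⟨h, t, hht⟩
        rw [hht]
        rfl
  | a :: b :: as, Y, Z => by
    cases Y with
    | nil => rw [odot_nil_right]; rfl
    | cons y ys =>
      rw [odot_cons a (by simp : (b::as) ≠ []) (y::ys),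
          odot_cons a (odot_ne_nil (b::as) (by simp : (y::ys) ≠ [])) Z,
          odot_assoc (b :: as) (y :: ys) Z,
          ← odot_cons a (by simp : (b::as) ≠ []) (odot (y::ys) Z)]

lemma sum_odot : ∀ (X B : List ℕ), (odot X B).sum = X.sum + B.sum
  | [], B => by simp [odot]
  | [a], [] => by simp [odot]
  | [a], b :: bs => by simp [odot]; ring
  | a :: b :: as, B => by
    show (a :: odot (b :: as) B).sum = _
    simp [sum_odot (b :: as) B]; ring

lemma pos_odot {X B : List ℕ} (hX : ∀ x ∈ X, 0 < x) (hB : ∀ x ∈ B, 0 < x) :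
    ∀ x ∈ odot X B, 0 < x := by
  rcases eq_or_ne X [] with rfl | hXn
  · simpa [odot] using hB
  rcases eq_or_ne B [] with rfl | hBn
  · simpa [odot_nil_right] using hX
  rw [odot_formula X B hXn hBn]
  intro x hx
  rcases List.mem_append.1 hx with h | h
  · exact hX x (List.dropLast_subset X h)
  · rcases List.mem_cons.1 h with rfl | h
    · have := hX _ (List.getLast_mem hXn); omega
    · exact hB x (List.mem_of_mem_tail h)

lemma length_odot (X B : List ℕ) (hX : X ≠ []) (hB : B ≠ []) :
    (odot X B).length = X.length + B.length - 1 := by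
  rw [odot_formula X B hX hB]
  simp [List.length_dropLast]
  have : 1 ≤ X.length := List.length_pos_iff.2 hX
  have : 1 ≤ B.length := List.length_pos_iff.2 hB
  omega

lemma reverse_odot : ∀ (X B : List ℕ), (odot X B).reverse = odot B.reverse X.reverse := by
  intro X B
  rcases eq_or_ne X [] with rfl | hXn
  · simp [odot, odot_nil_right]
  rcases eq_or_ne B [] with rfl | hBn
  · simp [odot, odot_nil_right]
  rw [odot_formula X B hXn hBn,
      odot_formula B.reverse X.reverse (by simpa using hBn) (by simpa using hXn)]
  simp [List.reverse_append, List.head_reverse, List.getLast_reverse, List.tail_reverse,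
        List.dropLast_reverse]
  ring_nf

lemma odotPow_one (B : List ℕ) : odotPow B 1 = B := rfl

lemma odotPow_ne_nil {B : List ℕ} (hB : B ≠ []) {b : ℕ} (hb : 0 < b) : odotPow B b ≠ [] := by
  cases b with
  | zero => omega
  | succ n => exact odot_ne_nil _ hB

lemma odotPow_add (B : List ℕ) (i j : ℕ) (hj : 0 < j) :
    odotPow B (i + j) = odot (odotPow B i) (odotPow B j) := by
  induction j with
  | zero => omega
  | succ n ih =>
    rcases Nat.eq_zero_or_pos n with rfl | hn
    · show odotPow B (i + 1) = _
      rfl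
    · show odot (odotPow B (i + n)) B = _
      rw [ih hn, odot_assoc]
      rfl

lemma odotPow_succ' (B : List ℕ) (n : ℕ) : odotPow B (n + 1) = odot B (odotPow B n) := by
  rcases Nat.eq_zero_or_pos n with rfl | hn
  · simp [odotPow, odot, odot_nil_right]
  · rw [show n + 1 = 1 + n by omega, odotPow_add B 1 n hn, odotPow_one]

lemma reverse_odotPow (B : List ℕ) (n : ℕ) :
    (odotPow B n).reverse = odotPow B.reverse n := by
  induction n with
  | zero => rfl
  | succ k ih =>
    show (odot (odotPow B k) B).reverse = _
    rw [reverse_odot, ih, ← odotPow_succ']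

lemma sum_odotPow (B : List ℕ) (n : ℕ) : (odotPow B n).sum = n * B.sum := by
  induction n with
  | zero => simp [odotPow]
  | succ k ih =>
    show (odot (odotPow B k) B).sum = _
    rw [sum_odot, ih]; ring

lemma pos_odotPow {B : List ℕ} (hB : ∀ x ∈ B, 0 < x) (n : ℕ) :
    ∀ x ∈ odotPow B n, 0 < x := by
  induction n with
  | zero => simp [odotPow]
  | succ k ih => exact pos_odot ih hB

lemma length_odotPow {B : List ℕ} (hB : B ≠ []) : ∀ {b : ℕ}, 0 < b →
    (odotPow B b).length = b * (B.length - 1) + 1 := by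
  intro b hb
  induction b with
  | zero => omega
  | succ n ih =>
    rcases Nat.eq_zero_or_pos n with rfl | hn
    · simp [odotPow_one]
      have := List.length_pos_iff.2 hB
      omega
    · show (odot (odotPow B n) B).length = _
      rw [length_odot _ _ (odotPow_ne_nil hB hn) hB, ih hn]
      have := List.length_pos_iff.2 hB
      have : 1 ≤ B.length := this
      cases' Nat.exists_eq_add_of_le this with m hm
      rw [hm]
      ring_nf
      omega

lemma getLast?_odot (X B : List ℕ) (hX : X ≠ []) (hB2 : 2 ≤ B.length) :
    (odot X B).getLast? = B.getLast? := by
  have hB : B ≠ [] := by rw [← List.length_pos_iff]; omega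
  rw [odot_formula X B hX hB, List.getLast?_append]
  cases B with
  | nil => simp at hB2
  | cons x xs =>
    cases xs with
    | nil => simp at hB2
    | cons y ys =>
      simp only [List.tail_cons, List.getLast?_cons_cons]
      rw [List.getLast?_eq_getLast (l := y::ys) (by simp)]
      rfl

lemma getLast?_odotPow {B : List ℕ} (hB2 : 2 ≤ B.length) {b : ℕ} (hb : 0 < b) :
    (odotPow B b).getLast? = B.getLast? := by
  have hB : B ≠ [] := by rw [← List.length_pos_iff]; omega
  induction b with
  | zero => omega
  | succ n ih =>
    rcases Nat.eq_zero_or_pos n with rfl | hn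
    · rw [odotPow_one]
    · exact getLast?_odot _ _ (odotPow_ne_nil hB hn) hB2

lemma take_odotPow {B : List ℕ} (hB : B ≠ []) {b : ℕ} (hb : 0 < b) :
    (odotPow B b).take (B.length - 1) = B.take (B.length - 1) := by
  induction b with
  | zero => omega
  | succ n ih =>
    rcases Nat.eq_zero_or_pos n with rfl | hn
    · rw [odotPow_one]
    · have hX : odotPow B n ≠ [] := odotPow_ne_nil hB hn
      show (odot (odotPow B n) B).take _ = _
      rw [odot_formula _ _ hX hB, List.take_append]
      have hlen : (odotPow B n).length = n * (B.length - 1) + 1 := length_odotPow hB hn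
      have h1 : B.length - 1 ≤ ((odotPow B n).dropLast).length := by
        rw [List.length_dropLast, hlen]
        have := Nat.le_mul_of_pos_left (B.length - 1) hn
        omega
      rw [Nat.sub_eq_zero_of_le h1]
      simp
      rw [List.dropLast_eq_take, List.take_take, min_eq_left (by rw [hlen]; have := Nat.le_mul_of_pos_left (B.length - 1) hn; omega)]
      exact ih hn

lemma circ_nil (B : List ℕ) : circ [] B = [] := rfl

lemma circ_cons (b : ℕ) (f B : List ℕ) :
    circ (b :: f) B = odotPow B b ++ circ f B := by
  simp [circ]

lemma circ_append (f g B : List ℕ) : circ (f ++ g) B = circ f B ++ circ g B := by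
  simp [circ]

lemma sum_circ (f B : List ℕ) : (circ f B).sum = f.sum * B.sum := by
  induction f with
  | nil => simp [circ]
  | cons b t ih => rw [circ_cons]; simp [sum_odotPow, ih]; ring

lemma circ_ne_nil {f B : List ℕ} (hf : f ≠ []) (hfp : ∀ x ∈ f, 0 < x) (hB : B ≠ []) :
    circ f B ≠ [] := by
  cases f with
  | nil => exact absurd rfl hf
  | cons b t =>
    rw [circ_cons]
    have : odotPow B b ≠ [] := odotPow_ne_nil hB (hfp b (by simp))
    simp [this]

lemma pos_circ {f B : List ℕ} (hB : ∀ x ∈ B, 0 < x) :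
    ∀ x ∈ circ f B, 0 < x := by
  intro x hx
  rcases List.mem_flatten.1 hx with ⟨l, hl, hxl⟩
  rcases List.mem_map.1 hl with ⟨b, _, rfl⟩
  exact pos_odotPow hB b x hxl

lemma circ_isComposition {f B : List ℕ} (hf : IsComposition f) (hB : IsComposition B) :
    IsComposition (circ f B) :=
  ⟨circ_ne_nil hf.1 hf.2 hB.1, pos_circ hB.2⟩

lemma reverse_circ (f B : List ℕ) : (circ f B).reverse = circ f.reverse B.reverse := by
  unfold circ
  rw [List.reverse_flatten]
  congr 1
  rw [← List.map_reverse, ← List.map_reverse, List.map_map]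
  congr 1
  funext b
  exact reverse_odotPow B b

lemma odotPow_single (x : ℕ) : ∀ {b : ℕ}, 0 < b → odotPow [x] b = [b * x] := by
  intro b hb
  induction b with
  | zero => omega
  | succ n ih =>
    rcases Nat.eq_zero_or_pos n with rfl | hn
    · simp [odotPow_one]
    · show odot (odotPow [x] n) [x] = _
      rw [ih hn]
      show [n * x + x] = _
      congr 1
      ring

lemma circ_single {f : List ℕ} (hf : ∀ b ∈ f, 0 < b) (x : ℕ) :
    circ f [x] = f.map (· * x) := by
  induction f with
  | nil => rfl
  | cons b t ih =>
    rw [circ_cons, odotPow_single x (hf b (by simp)), ih (fun y hy => hf y (by simp [hy]))]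
    rfl

lemma circ_one_right {f : List ℕ} (hf : ∀ b ∈ f, 0 < b) : circ f [1] = f := by
  rw [circ_single hf 1]
  simp

lemma circ_one_left (B : List ℕ) : circ [1] B = B := by
  rw [circ_cons, odotPow_one, circ_nil, List.append_nil]

lemma circ_take {f B : List ℕ} (hf : f ≠ []) (hfp : ∀ x ∈ f, 0 < x) (hB : B ≠ []) :
    (circ f B).take (B.length - 1) = B.take (B.length - 1) := by
  cases f with
  | nil => exact absurd rfl hf
  | cons b t =>
    have hb : 0 < b := hfp b (by simp)
    rw [circ_cons, List.take_append]
    have hlen : (odotPow B b).length = b * (B.length - 1) + 1 := length_odotPow hB hb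
    have h1 : B.length - 1 ≤ (odotPow B b).length := by
      rw [hlen]
      have := Nat.le_mul_of_pos_left (B.length - 1) hb
      omega
    rw [Nat.sub_eq_zero_of_le h1]
    simp [take_odotPow hB hb]

lemma getLast?_circ {f B : List ℕ} (hf : f ≠ []) (hfp : ∀ x ∈ f, 0 < x) (hB2 : 2 ≤ B.length) :
    (circ f B).getLast? = B.getLast? := by
  induction f with
  | nil => exact absurd rfl hf
  | cons b t ih =>
    rw [circ_cons, List.getLast?_append]
    rcases eq_or_ne t [] with rfl | ht
    · rw [circ_nil]
      simp
      exact getLast?_odotPow hB2 (hfp b (by simp))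
    · rw [ih ht (fun y hy => hfp y (by simp [hy]))]
      have hB : B ≠ [] := by rw [← List.length_pos_iff]; omega
      rw [List.getLast?_eq_getLast (l := B) hB]
      rfl

lemma circ_left_cancel_aux {B : List ℕ} (hB : IsComposition B)
    {b c : ℕ} {t s : List ℕ} (hb : 0 < b) (hlt : b < c)
    (h : circ (b :: t) B = circ (c :: s) B) : False := by
  have hBn := hB.1
  obtain ⟨d, rfl⟩ : ∃ d, c = b + (d + 1) := ⟨c - b - 1, by omega⟩
  have hX : odotPow B b ≠ [] := odotPow_ne_nil hBn hb
  have hY : odotPow B (d + 1) ≠ [] := odotPow_ne_nil hBn (by omega)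
  set X := odotPow B b with hXdef
  set Y := odotPow B (d + 1) with hYdef
  set z := X.getLast hX + Y.head hY with hzdef
  have hsplit : odotPow B (b + (d + 1)) = X.dropLast ++ z :: Y.tail := by
    rw [odotPow_add B b (d + 1) (by omega), odot_formula X Y hX hY]
  rw [circ_cons, circ_cons, hsplit] at h
  have h2 := congrArg (List.take X.length) h
  rw [List.take_left] at h2
  rw [List.append_assoc, List.cons_append, List.take_append] at h2
  have hdl : X.dropLast.length = X.length - 1 := List.length_dropLast
  have hXlen : 0 < X.length := List.length_pos_iff.2 hX
  rw [List.take_of_length_le (by omega)] at h2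
  have : X.length - X.dropLast.length = 1 := by omega
  rw [this] at h2
  simp only [List.take_succ_cons, List.take_zero] at h2
  have e1 : X.getLast? = some z := by
    conv_lhs => rw [h2]
    rw [List.getLast?_concat]
  rw [List.getLast?_eq_getLast (l := X) hX] at e1
  have h4 : X.getLast hX = z := by injection e1
  have : 0 < Y.head hY := pos_odotPow hB.2 (d + 1) _ (List.head_mem hY)
  omega

lemma circ_left_cancel {B : List ℕ} (hB : IsComposition B) :
    ∀ f g : List ℕ, (∀ x ∈ f, 0 < x) → (∀ x ∈ g, 0 < x) →
      circ f B = circ g B → f = g := by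
  intro f
  induction f with
  | nil =>
    intro g _ hg h
    cases g with
    | nil => rfl
    | cons c s =>
      rw [circ_nil] at h
      exact absurd h.symm (circ_ne_nil (by simp) hg hB.1)
  | cons b t ih =>
    intro g hf hg h
    cases g with
    | nil =>
      rw [circ_nil] at h
      exact absurd h (circ_ne_nil (by simp) hf hB.1)
    | cons c s =>
      have hb : 0 < b := hf b (by simp)
      have hc : 0 < c := hg c (by simp)
      rcases lt_trichotomy b c with hlt | rfl | hgt
      · exact absurd h (fun h => circ_left_cancel_aux hB hb hlt h)
      · rw [circ_cons, circ_cons] at h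
        have h5 := List.append_cancel_left h
        rw [ih s (fun y hy => hf y (by simp [hy])) (fun y hy => hg y (by simp [hy])) h5]
      · exact absurd h.symm (fun h => circ_left_cancel_aux hB hc hgt h)

lemma circ_inj {f g B C : List ℕ} (hf : IsComposition f) (hg : IsComposition g)
    (hB : IsComposition B) (hC : IsComposition C) (hlen : B.length = C.length)
    (hsum : B.sum = C.sum) (h : circ f B = circ g C) : f = g ∧ B = C := by
  have hBC : B = C := by
    have ht : B.take (B.length - 1) = C.take (C.length - 1) := by
      rw [← circ_take hf.1 hf.2 hB.1, ← circ_take hg.1 hg.2 hC.1, h, hlen]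
    have hdB := List.sum_take_add_sum_drop B (B.length - 1)
    have hdC := List.sum_take_add_sum_drop C (C.length - 1)
    have hlB : 0 < B.length := List.length_pos_iff.2 hB.1
    have hlenB : (B.drop (B.length - 1)).length = 1 := by
      rw [List.length_drop]; omega
    have hlenC : (C.drop (C.length - 1)).length = 1 := by
      rw [List.length_drop]; omega
    rcases List.length_eq_one_iff.1 hlenB with ⟨x, hx⟩
    rcases List.length_eq_one_iff.1 hlenC with ⟨y, hy⟩
    have hxy : x = y := by
      rw [hx] at hdB; rw [hy] at hdC
      simp at hdB hdC
      rw [ht] at hdB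
      omega
    calc B = B.take (B.length - 1) ++ B.drop (B.length - 1) := (List.take_append_drop _ B).symm
      _ = C.take (C.length - 1) ++ C.drop (C.length - 1) := by rw [ht, hx, hy, hxy]
      _ = C := List.take_append_drop _ C
  subst hBC
  exact ⟨circ_left_cancel hB f g hf.2 hg.2 h, rfl⟩

lemma odot_append_left (A : List ℕ) {P : List ℕ} (hP : P ≠ []) (Z : List ℕ) :
    odot (A ++ P) Z = A ++ odot P Z := by
  induction A with
  | nil => simp
  | cons a A ih =>
    rw [List.cons_append, odot_cons a (by simp [hP]) Z, ih]
    rfl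

lemma odot_append_right {P Q : List ℕ} (hP : P ≠ []) (hQ : Q ≠ []) (R : List ℕ) :
    odot P (Q ++ R) = odot P Q ++ R := by
  rw [odot_formula P (Q ++ R) hP (by simp [hQ]), odot_formula P Q hP hQ]
  rw [List.head_append_of_ne_nil hQ, List.tail_append]
  simp [hQ]

lemma circ_flatten (L : List (List ℕ)) (c : List ℕ) :
    circ L.flatten c = (L.map (fun x => circ x c)).flatten := by
  induction L with
  | nil => rfl
  | cons x L ih => rw [List.flatten_cons, circ_append, ih]; rfl

lemma circ_odot {X Y c : List ℕ} (hX : ∀ x ∈ X, 0 < x) (hY : ∀ x ∈ Y, 0 < x)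
    (hc : c ≠ []) : circ (odot X Y) c = odot (circ X c) (circ Y c) := by
  rcases eq_or_ne X [] with rfl | hXn
  · rfl
  rcases eq_or_ne Y [] with rfl | hYn
  · rw [odot_nil_right, circ_nil, odot_nil_right]
  obtain ⟨yh, Yt, rfl⟩ := List.exists_cons_of_ne_nil hYn
  have hxl : 0 < X.getLast hXn := hX _ (List.getLast_mem hXn)
  have hyh : 0 < yh := hY yh (by simp)
  have hPne : odotPow c (X.getLast hXn) ≠ [] := odotPow_ne_nil hc hxl
  have hQne : odotPow c yh ≠ [] := odotPow_ne_nil hc hyh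
  rw [odot_formula X (yh :: Yt) hXn (by simp)]
  rw [circ_append, circ_cons]
  simp only [List.head_cons, List.tail_cons]
  conv_rhs => rw [← List.dropLast_append_getLast hXn]
  rw [circ_append, circ_cons, circ_cons, circ_nil, List.append_nil]
  rw [odot_append_left _ hPne, odot_append_right hPne hQne]
  rw [← odotPow_add c _ yh hyh]

lemma odotPow_circ {b c : List ℕ} (hb : ∀ x ∈ b, 0 < x) (hc : c ≠ []) (n : ℕ) :
    circ (odotPow b n) c = odotPow (circ b c) n := by
  induction n with
  | zero => rfl
  | succ k ih =>
    show circ (odot (odotPow b k) b) c = odot (odotPow (circ b c) k) (circ b c)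
    rw [circ_odot (pos_odotPow hb k) hb hc, ih]

lemma circ_assoc {a b c : List ℕ} (hb : ∀ x ∈ b, 0 < x) (hc : c ≠ []) :
    circ (circ a b) c = circ a (circ b c) := by
  rw [show circ a b = (a.map (odotPow b)).flatten from rfl, circ_flatten, List.map_map]
  show _ = (a.map (odotPow (circ b c))).flatten
  congr 1
  apply List.map_congr_left
  intro x _
  exact odotPow_circ hb hc x

lemma one_isComposition : IsComposition [1] := ⟨by simp, by simp⟩

lemma circList_isComposition {fs : List (List ℕ)} (h : ∀ f ∈ fs, IsComposition f) :
    IsComposition (circList fs) := by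
  induction fs with
  | nil => exact one_isComposition
  | cons f t ih =>
    exact circ_isComposition (h f (by simp)) (ih (fun g hg => h g (by simp [hg])))

lemma circList_cons (f : List ℕ) (fs : List (List ℕ)) :
    circList (f :: fs) = circ f (circList fs) := rfl

lemma circList_append {as bs : List (List ℕ)} (has : ∀ f ∈ as, IsComposition f)
    (hbs : ∀ f ∈ bs, IsComposition f) :
    circList (as ++ bs) = circ (circList as) (circList bs) := by
  induction as with
  | nil => rw [List.nil_append]; exact (circ_one_left _).symm
  | cons a t ih =>
    rw [List.cons_append, circList_cons, circList_cons,
        ih (fun g hg => has g (by simp [hg])),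
        circ_assoc (circList_isComposition (fun g hg => has g (by simp [hg]))).2
          (circList_isComposition hbs).1]

lemma circList_reverse {fs : List (List ℕ)} (h : ∀ f ∈ fs, IsComposition f) :
    (circList fs).reverse = circList (fs.map List.reverse) := by
  induction fs with
  | nil => rfl
  | cons f t ih =>
    rw [circList_cons, reverse_circ, List.map_cons, circList_cons,
        ih (fun g hg => h g (by simp [hg]))]

lemma sum_circList (fs : List (List ℕ)) :
    (circList fs).sum = (fs.map List.sum).prod := by
  induction fs with
  | nil => simp [circList]
  | cons f t ih => rw [circList_cons, sum_circ, ih]; simp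

lemma comp_sum_pos {f : List ℕ} (hf : IsComposition f) : 0 < f.sum := by
  cases f with
  | nil => exact absurd rfl hf.1
  | cons a t =>
    have := hf.2 a (by simp)
    simp [List.sum_cons]
    omega

lemma comp_sum_one {f : List ℕ} (hf : IsComposition f) (h : f.sum = 1) : f = [1] := by
  cases f with
  | nil => exact absurd rfl hf.1
  | cons a t =>
    have ha := hf.2 a (by simp)
    simp [List.sum_cons] at h
    have hte : t = [] := by
      by_contra hte
      obtain ⟨b, tb, rfl⟩ := List.exists_cons_of_ne_nil hte
      have := hf.2 b (by simp)
      simp [List.sum_cons] at h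
      omega
    subst hte
    simp at h ⊢
    omega

lemma irred_len1 (n : ℕ) : IrredComp [n] := by
  intro β γ hβ hγ heq
  obtain ⟨b, bs, rfl⟩ := List.exists_cons_of_ne_nil hβ.1
  have hb : 0 < b := hβ.2 b (by simp)
  have hXlen : (odotPow γ b).length = b * (γ.length - 1) + 1 := length_odotPow hγ.1 hb
  have hγlen : 0 < γ.length := List.length_pos_iff.2 hγ.1
  have hlen : (circ (b :: bs) γ).length = 1 := by rw [← heq]; rfl
  rw [circ_cons, List.length_append, hXlen] at hlen
  set K := b * (γ.length - 1) with hK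
  have hK0 : K = 0 := by omega
  have hm : γ.length = 1 := by
    rcases Nat.mul_eq_zero.1 (hK ▸ hK0) with h | h
    · omega
    · omega
  have hbs : circ bs γ = [] := List.length_eq_zero_iff.1 (by omega)
  have hbse : bs = [] := by
    by_contra hbse
    exact circ_ne_nil hbse (fun y hy => hβ.2 y (by simp [hy])) hγ.1 hbs
  subst hbse
  exact Or.inr (Or.inr (Or.inl ⟨by simp, hm⟩))

lemma irred_ones {f : List ℕ} (hf : IsComposition f) (h1 : ∀ x ∈ f, x = 1) :
    IrredComp f := by
  intro β γ hβ hγ heq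
  refine Or.inr (Or.inr (Or.inr ?_))
  rcases Nat.lt_or_ge γ.length 2 with hm | hm
  · -- γ.length = 1
    have hγlen : γ.length = 1 := by
      have := List.length_pos_iff.2 hγ.1; omega
    obtain ⟨x, rfl⟩ := List.length_eq_one_iff.1 hγlen
    rw [circ_single hβ.2 x] at heq
    have key : ∀ b ∈ β, b * x = 1 := fun b hb =>
      h1 _ (by rw [heq]; exact List.mem_map.2 ⟨b, hb, rfl⟩)
    constructor
    · intro b hb
      exact Nat.eq_one_of_mul_eq_one_right (key b hb)
    · intro c hc
      simp at hc
      subst hc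
      obtain ⟨b, bs, rfl⟩ := List.exists_cons_of_ne_nil hβ.1
      exact Nat.eq_one_of_mul_eq_one_left (key b (by simp))
  · -- γ.length ≥ 2
    have hγn := hγ.1
    constructor
    · intro b hb
      have hbpos := hβ.2 b hb
      by_contra hb1
      have hb2 : 2 ≤ b := by omega
      have hX : odotPow γ (b - 1) ≠ [] := odotPow_ne_nil hγn (by omega)
      set X := odotPow γ (b - 1) with hXdef
      have hsplit : odotPow γ b = X.dropLast ++ (X.getLast hX + γ.head hγn) :: γ.tail := by
        rw [show b = (b - 1) + 1 by omega]
        show odot X γ = _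
        exact odot_formula X γ hX hγn
      have hzmem : X.getLast hX + γ.head hγn ∈ circ β γ := by
        apply List.mem_flatten.2
        refine ⟨odotPow γ b, List.mem_map.2 ⟨b, hb, rfl⟩, ?_⟩
        rw [hsplit]
        simp
      rw [← heq] at hzmem
      have := h1 _ hzmem
      have hpx : 0 < X.getLast hX := pos_odotPow hγ.2 (b - 1) _ (List.getLast_mem hX)
      have hph : 0 < γ.head hγn := hγ.2 _ (List.head_mem hγn)
      omega
    · intro c hc
      have htake : γ.take (γ.length - 1) = f.take (γ.length - 1) := by
        rw [heq, circ_take hβ.1 hβ.2 hγn]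
      have hlast : γ.getLast? = f.getLast? := by
        rw [heq, getLast?_circ hβ.1 hβ.2 hm]
      have hdlen : (γ.drop (γ.length - 1)).length = 1 := by
        rw [List.length_drop]; omega
      obtain ⟨x, hdx⟩ := List.length_eq_one_iff.1 hdlen
      rw [← List.take_append_drop (γ.length - 1) γ, hdx] at hc
      rcases List.mem_append.1 hc with h | h
      · rw [htake] at h
        exact h1 c (List.take_subset _ _ h)
      · have hγeq : γ = γ.take (γ.length - 1) ++ [x] := by
          conv_lhs => rw [← List.take_append_drop (γ.length - 1) γ, hdx]
        have hgl : γ.getLast? = some x := by rw [hγeq]; exact List.getLast?_concat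
        rw [hlast, List.getLast?_eq_getLast (l := f) hf.1] at hgl
        have hx1 : x = 1 := by
          have := h1 _ (List.getLast_mem hf.1)
          injection hgl with hgl'
          omega
        simp at h
        omega

lemma sum_ones {l : List ℕ} (h : ∀ x ∈ l, x = 1) : l.sum = l.length := by
  induction l with
  | nil => rfl
  | cons a t ih =>
    simp [h a (by simp), ih (fun y hy => h y (by simp [hy]))]
    omega

lemma ones_ne_one_sum {l : List ℕ} (hl : IsComposition l) (h : ∀ x ∈ l, x = 1)
    (hne : l ≠ [1]) : 2 ≤ l.sum := by
  cases l with
  | nil => exact absurd rfl hl.1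
  | cons a t =>
    have ha := h a (by simp)
    cases t with
    | nil => simp [ha] at hne
    | cons b tb =>
      have hb := h b (by simp)
      simp [ha, hb]
      omega

lemma circ_ones {a b : List ℕ} (ha : ∀ x ∈ a, x = 1) (hb : ∀ x ∈ b, x = 1) :
    ∀ x ∈ circ a b, x = 1 := by
  intro x hx
  rcases List.mem_flatten.1 hx with ⟨l, hl, hxl⟩
  rcases List.mem_map.1 hl with ⟨k, hk, rfl⟩
  rw [ha k hk, odotPow_one] at hxl
  exact hb x hxl

lemma trivialFact_cases {a b : List ℕ} (h : TrivialFact a b) (ha : a ≠ [1]) (hb : b ≠ [1]) :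
    (a.length = 1 ∧ b.length = 1) ∨ ((∀ x ∈ a, x = 1) ∧ (∀ x ∈ b, x = 1)) := by
  rcases h with h | h | h | h
  · exact absurd h ha
  · exact absurd h hb
  · exact Or.inl h
  · exact Or.inr h

lemma getLast?_factor_ne_one {γ : List ℕ} {gs : List (List ℕ)}
    (hfact : IsIrredFactorization γ gs) (hγ : γ ≠ [1]) :
    ∀ gl ∈ gs.getLast?, gl ≠ [1] := by
  obtain ⟨hne', hcomps, hchain, hprod⟩ := hfact
  rcases List.eq_nil_or_concat gs with rfl | ⟨init, gl, rfl⟩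
  · simp
  · rw [List.concat_eq_append] at hcomps hchain hprod ⊢
    rw [List.getLast?_concat]
    simp only [Option.mem_def, Option.some.injEq]
    rintro x rfl
    cases init with
    | nil =>
      intro h1
      apply hγ
      rw [hprod]
      simp only [List.nil_append]
      rw [circList_cons, show circList [] = [1] from rfl,
          circ_one_right (hcomps gl (by simp)).1.2]
      exact h1
    | cons i0 it =>
      rw [List.Chain', List.isChain_append] at hchain
      intro hgl1
      have := hchain.2.2 ((i0 :: it).getLast (by simp))
        (by rw [List.getLast?_eq_getLast (by simp)]; rfl) gl (by simp)
      exact this (Or.inr (Or.inl hgl1))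

lemma head_factor_ne_one {δ : List ℕ} {dh : List ℕ} {dt : List (List ℕ)}
    (hfact : IsIrredFactorization δ (dh :: dt)) (hδ : δ ≠ [1]) : dh ≠ [1] := by
  obtain ⟨_, hcomps, hchain, hprod⟩ := hfact
  cases dt with
  | nil =>
    intro h1
    apply hδ
    rw [hprod, circList_cons, show circList [] = [1] from rfl,
        circ_one_right (hcomps dh (by simp)).1.2]
    exact h1
  | cons d2 dt2 =>
    have := (List.isChain_cons_cons.1 hchain).1
    intro h
    exact this (Or.inl h)

lemma merge_case {β γ δ gl dh M : List ℕ} {gs dt : List (List ℕ)}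
    (hβ : IsComposition β) (heq : β = circ γ δ)
    (hgs : IsIrredFactorization γ gs) (hds : IsIrredFactorization δ (dh :: dt))
    (hgs0 : gs ≠ []) (hgldef : gl = gs.getLast hgs0)
    (hMeq : circ gl dh = M) (hMcomp : IsComposition M) (hMirred : IrredComp M)
    (TL : ∀ x, ¬TrivialFact x gl → ¬TrivialFact x M)
    (TR : ∀ y, ¬TrivialFact dh y → ¬TrivialFact M y) :
    ∃ fs, IsIrredFactorization β fs := by
  obtain ⟨hgsne, hgcompsI, hgchain, hgprod⟩ := hgs
  obtain ⟨hdsne, hdcompsI, hdchain, hdprod⟩ := hds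
  have hglcomp : IsComposition gl := (hgcompsI gl (hgldef ▸ List.getLast_mem hgs0)).1
  have hdhcomp : IsComposition dh := (hdcompsI dh (by simp)).1
  have hgsplit : gs.dropLast ++ [gl] = gs := by
    rw [hgldef]; exact List.dropLast_append_getLast hgs0
  have hdlcomp : ∀ f ∈ gs.dropLast, IsComposition f :=
    fun f hf => (hgcompsI f (List.dropLast_subset gs hf)).1
  have hdtcomp : IsComposition (circList dt) :=
    circList_isComposition (fun f hf => (hdcompsI f (by simp [hf])).1)
  refine ⟨gs.dropLast ++ M :: dt, by simp, ?_, ?_, ?_⟩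
  · intro f hf
    rcases List.mem_append.1 hf with h | h
    · exact hgcompsI f (List.dropLast_subset gs h)
    · rcases List.mem_cons.1 h with rfl | h
      · exact ⟨hMcomp, hMirred⟩
      · exact hdcompsI f (by simp [h])
  · have hchaing := hgchain
    rw [← hgsplit, List.Chain', List.isChain_append] at hchaing
    obtain ⟨hc1, _, hjl⟩ := hchaing
    have hdc := List.isChain_cons.1 hdchain
    apply List.isChain_append.2
    refine ⟨hc1, List.isChain_cons.2 ⟨fun y hy => TR y (hdc.1 y hy), hdc.2⟩, ?_⟩
    intro x hx y hy
    simp at hy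
    subst hy
    exact TL x (hjl x hx gl (by simp))
  · have hMdt : ∀ f ∈ M :: dt, IsComposition f := by
      intro f hf
      rcases List.mem_cons.1 hf with rfl | h
      · exact hMcomp
      · exact (hdcompsI f (by simp [h])).1
    rw [circList_append hdlcomp hMdt, circList_cons, ← hMeq]
    have hW : IsComposition (circ dh (circList dt)) := circ_isComposition hdhcomp hdtcomp
    rw [circ_assoc hdhcomp.2 hdtcomp.1, ← circ_assoc hglcomp.2 hW.1]
    have e1 : circ (circList gs.dropLast) gl = γ := by
      have h2 : circList (gs.dropLast ++ [gl]) =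
          circ (circList gs.dropLast) (circList [gl]) :=
        circList_append hdlcomp (by intro f hf; simp at hf; subst hf; exact hglcomp)
      have h3 : circList [gl] = gl := by
        rw [circList_cons, show circList [] = [1] from rfl, circ_one_right hglcomp.2]
      rw [hgsplit, h3] at h2
      rw [← h2, ← hgprod]
    have e2 : circ dh (circList dt) = δ := by rw [← circList_cons, ← hdprod]
    rw [e1, e2, ← heq]

lemma exists_irred_fact : ∀ (n : ℕ) (β : List ℕ), β.sum ≤ n → IsComposition β →
    ∃ fs, IsIrredFactorization β fs := by
  intro n
  induction n with
  | zero =>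
    intro β hs hβ
    have := comp_sum_pos hβ
    omega
  | succ n ih =>
    intro β hs hβ
    by_cases hI : IrredComp β
    · refine ⟨[β], by simp, ?_, ?_, ?_⟩
      · intro f hf; simp at hf; subst hf; exact ⟨hβ, hI⟩
      · exact List.isChain_singleton β
      · rw [circList_cons, show circList [] = [1] from rfl, circ_one_right hβ.2]
    · rw [IrredComp] at hI
      push_neg at hI
      obtain ⟨γ, δ, hγ, hδ, heq, hnt⟩ := hI
      have hγ1 : γ ≠ [1] := fun h => hnt (Or.inl h)
      have hδ1 : δ ≠ [1] := fun h => hnt (Or.inr (Or.inl h))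
      have hsγ : 2 ≤ γ.sum := by
        have h1 := comp_sum_pos hγ
        rcases Nat.lt_or_ge γ.sum 2 with h | h
        · exact absurd (comp_sum_one hγ (by omega)) hγ1
        · exact h
      have hsδ : 2 ≤ δ.sum := by
        have h1 := comp_sum_pos hδ
        rcases Nat.lt_or_ge δ.sum 2 with h | h
        · exact absurd (comp_sum_one hδ (by omega)) hδ1
        · exact h
      have hsum : β.sum = γ.sum * δ.sum := by rw [heq, sum_circ]
      have hγn : γ.sum ≤ n := by nlinarith
      have hδn : δ.sum ≤ n := by nlinarith
      obtain ⟨gs, hgs⟩ := ih γ hγn hγ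
      obtain ⟨ds, hds⟩ := ih δ hδn hδ
      have hgs0 := hgs.1
      have hgcomps : ∀ f ∈ gs, IsComposition f := fun f hf => (hgs.2.1 f hf).1
      have hdcomps : ∀ f ∈ ds, IsComposition f := fun f hf => (hds.2.1 f hf).1
      obtain ⟨dh, dt, rfl⟩ := List.exists_cons_of_ne_nil hds.1
      obtain ⟨gl, hglsome⟩ : ∃ gl, gl = gs.getLast hgs0 := ⟨gs.getLast hgs0, rfl⟩
      have hgldef := hglsome
      have hglmem : gl ∈ gs := hgldef ▸ List.getLast_mem hgs0
      have hglcomp : IsComposition gl := hgcomps gl hglmem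
      have hdhcomp : IsComposition dh := hdcomps dh (by simp)
      have hgl1 : gl ≠ [1] :=
        getLast?_factor_ne_one hgs hγ1 gl
          (by rw [List.getLast?_eq_getLast hgs0, hgldef]; rfl)
      have hdh1 : dh ≠ [1] := head_factor_ne_one hds hδ1
      by_cases hT : TrivialFact gl dh
      · -- merge
        rcases trivialFact_cases hT hgl1 hdh1 with ⟨hl1, hl2⟩ | ⟨ho1, ho2⟩
        · -- both length 1
          obtain ⟨p, rfl⟩ := List.length_eq_one_iff.1 hl1
          obtain ⟨q, rfl⟩ := List.length_eq_one_iff.1 hl2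
          have hp : 2 ≤ p := by
            have h0 := hglcomp.2 p (by simp)
            rcases Nat.lt_or_ge p 2 with h | h
            · exfalso; apply hgl1
              have : p = 1 := by omega
              rw [this]
            · exact h
          have hq : 2 ≤ q := by
            have h0 := hdhcomp.2 q (by simp)
            rcases Nat.lt_or_ge q 2 with h | h
            · exfalso; apply hdh1
              have : q = 1 := by omega
              rw [this]
            · exact h
          have hMeq : circ [p] [q] = [p * q] := by
            rw [circ_single (by simp; omega) q]
            rfl
          exact merge_case hβ heq hgs hds hgs0 hgldef hMeq ⟨by simp, by simp; omega⟩
            (irred_len1 (p * q))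
            (fun x hx => by
              intro hTx
              apply hx
              rcases hTx with h | h | h | h
              · exact Or.inl h
              · refine absurd h fun hcon => ?_
                have : p * q = 1 := by simpa using hcon
                nlinarith
              · exact Or.inr (Or.inr (Or.inl ⟨h.1, rfl⟩))
              · have : p * q = 1 := h.2 (p * q) (by simp)
                nlinarith)
            (fun y hy => by
              intro hTy
              apply hy
              rcases hTy with h | h | h | h
              · refine absurd h fun hcon => ?_
                have : p * q = 1 := by simpa using hcon
                nlinarith
              · exact Or.inr (Or.inl h)
              · exact Or.inr (Or.inr (Or.inl ⟨rfl, h.2⟩))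
              · have : p * q = 1 := h.1 (p * q) (by simp)
                nlinarith)
        · -- both all ones
          have hMcomp : IsComposition (circ gl dh) := circ_isComposition hglcomp hdhcomp
          have hMones : ∀ x ∈ circ gl dh, x = 1 := circ_ones ho1 ho2
          have hMlen : 2 ≤ (circ gl dh).length := by
            have h1 : (circ gl dh).sum = gl.sum * dh.sum := sum_circ gl dh
            have h2 : 2 ≤ gl.sum := ones_ne_one_sum hglcomp ho1 hgl1
            have h3 : 2 ≤ dh.sum := ones_ne_one_sum hdhcomp ho2 hdh1
            have h4 := sum_ones hMones
            nlinarith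
          have hM1 : circ gl dh ≠ [1] := by
            intro h
            rw [h] at hMlen
            simp at hMlen
          exact merge_case hβ heq hgs hds hgs0 hgldef rfl hMcomp
            (irred_ones hMcomp hMones)
            (fun x hx => by
              intro hTx
              apply hx
              rcases hTx with h | h | h | h
              · exact Or.inl h
              · exact absurd h hM1
              · exact absurd h.2 (by omega)
              · exact Or.inr (Or.inr (Or.inr ⟨h.1, ho1⟩)))
            (fun y hy => by
              intro hTy
              apply hy
              rcases hTy with h | h | h | h
              · exact absurd h hM1
              · exact Or.inr (Or.inl h)
              · exact absurd h.1 (by omega)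
              · exact Or.inr (Or.inr (Or.inr ⟨ho2, h.2⟩)))
      · -- no merge needed
        refine ⟨gs ++ dh :: dt, by simp, ?_, ?_, ?_⟩
        · intro f hf
          rcases List.mem_append.1 hf with h | h
          · exact hgs.2.1 f h
          · exact hds.2.1 f h
        · apply List.isChain_append.2
          refine ⟨hgs.2.2.1, hds.2.2.1, ?_⟩
          intro x hx y hy
          rw [List.getLast?_eq_getLast hgs0] at hx
          simp at hx hy
          subst hx; subst hy
          exact hgldef ▸ hT
        · rw [circList_append hgcomps hdcomps, ← hgs.2.2.2, ← hds.2.2.2, ← heq]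

lemma reverse_isComposition {f : List ℕ} (hf : IsComposition f) :
    IsComposition f.reverse :=
  ⟨by simpa using hf.1, fun x hx => hf.2 x (List.mem_reverse.1 hx)⟩

lemma forward_aux : ∀ (fs : List (List ℕ)) (β : List ℕ),
    (∀ f ∈ fs, IsComposition f) → β = circList fs → β.reverse = β →
    ∀ f ∈ fs, f.reverse = f := by
  intro fs
  induction fs with
  | nil => simp
  | cons f rest ih =>
    intro β hcomps hprod hrev g hg
    have hfcomp := hcomps f (by simp)
    have hrcomp : ∀ x ∈ rest, IsComposition x := fun x hx => hcomps x (by simp [hx])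
    have hB : IsComposition (circList rest) := circList_isComposition hrcomp
    have key : circ f.reverse (circList rest).reverse = circ f (circList rest) := by
      rw [← reverse_circ, ← circList_cons, ← hprod]
      exact hrev
    obtain ⟨hf_eq, hB_eq⟩ := circ_inj (reverse_isComposition hfcomp) hfcomp
      (reverse_isComposition hB) hB List.length_reverse (List.sum_reverse _) key
    rcases List.mem_cons.1 hg with rfl | hg'
    · exact hf_eq
    · exact ih (circList rest) hrcomp rfl hB_eq g hg'


/-- A composition is a palindrome iff all factors in its
(unique) irreducible factorization are palindromes. -/
theorem palindrome_iff_factors_palindrome (β : List ℕ) (hβ : IsComposition β) :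
    β.reverse = β ↔
      ∀ fs : List (List ℕ), IsIrredFactorization β fs →
        ∀ f ∈ fs, f.reverse = f := by
  constructor
  · intro hrev fs hfs f hf
    exact forward_aux fs β (fun g hg => (hfs.2.1 g hg).1) hfs.2.2.2 hrev f hf
  · intro H
    obtain ⟨fs, hfs⟩ := exists_irred_fact β.sum β le_rfl hβ
    have hall := H fs hfs
    have hcomps : ∀ f ∈ fs, IsComposition f := fun f hf => (hfs.2.1 f hf).1
    have hrev : β.reverse = circList (fs.map List.reverse) := by
      rw [hfs.2.2.2, circList_reverse hcomps]
    have hmap : fs.map List.reverse = fs := by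
      conv_rhs => rw [← List.map_id fs]
      exact List.map_congr_left (fun f hf => hall f hf)
    rw [hrev, hmap, ← hfs.2.2.2]
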